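/- Let 𝓑 be a homothecy invariant density basis of bounded open convex sets in ℝⁿ, and let E ⊆ ℝⁿ be measurable with 0 < |E| < ∞. Suppose |{x ∈ ℝⁿ : M_𝓑 χ_E(x) = 1}| > |E|. Then there exists a set A ⊆ E^c with |A| > 0 such that for every x ∈ A there is a sequence (R_{x,j})_{j≥2} of sets of 𝓑 with x ∈ R_{x,j} for all j, (1/|R_{x,j}|)∫_{R_{x,j}} χ_E > 1 − 1/j for all j ≥ 2, and lim_{j→∞} diam(R_{x,j}) = ∞. -/

import Mathlib

open MeasureTheory Set Filter
open scoped ENNReal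
open scoped Pointwise

/-- The geometric maximal operator associated to a collection `B` of sets. -/
noncomputable def MB {n : ℕ} (B : Set (Set (EuclideanSpace ℝ (Fin n))))
    (f : EuclideanSpace ℝ (Fin n) → ℝ≥0∞) (x : EuclideanSpace ℝ (Fin n)) : ℝ≥0∞ :=
  ⨆ (R ∈ B) (_ : x ∈ R), (∫⁻ y in R, f y) / volume R

/-- `B` is a density basis: every point lies in sets of `B` of arbitrarily
small diameter, and averages of indicators over shrinking sets of `B`
converge a.e. to the indicator. -/
def IsDensityBasis {n : ℕ} (B : Set (Set (EuclideanSpace ℝ (Fin n)))) : Prop :=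
  (∀ x : EuclideanSpace ℝ (Fin n), ∀ ε : ℝ, 0 < ε →
    ∃ R ∈ B, x ∈ R ∧ Metric.diam R < ε) ∧
  ∀ E : Set (EuclideanSpace ℝ (Fin n)), MeasurableSet E → volume E < ⊤ →
    ∀ᵐ x : EuclideanSpace ℝ (Fin n) ∂volume,
      ∀ R : ℕ → Set (EuclideanSpace ℝ (Fin n)),
        (∀ k, R k ∈ B) → (∀ k, x ∈ R k) →
        Filter.Tendsto (fun k => Metric.diam (R k)) Filter.atTop (nhds 0) →
        Filter.Tendsto (fun k => (∫⁻ y in R k, E.indicator 1 y) / volume (R k))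
          Filter.atTop (nhds (E.indicator (1 : EuclideanSpace ℝ (Fin n) → ℝ≥0∞) x))

private lemma lint_ind_eq {n : ℕ} {E : Set (EuclideanSpace ℝ (Fin n))}
    (hE : MeasurableSet E) (S : Set (EuclideanSpace ℝ (Fin n))) :
    (∫⁻ y in S, E.indicator 1 y) = volume (E ∩ S) := by
  simp only [lintegral_indicator hE, Pi.one_apply, setLIntegral_one, Measure.restrict_apply hE]

private lemma vol_affine_image {n : ℕ} (a : EuclideanSpace ℝ (Fin n)) {t : ℝ} (ht : 0 ≤ t)
    (S : Set (EuclideanSpace ℝ (Fin n))) :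
    volume ((fun y => a + t • y) '' S) = ENNReal.ofReal (t ^ n) * volume S := by
  have himg : (fun y : EuclideanSpace ℝ (Fin n) => a + t • y) '' S = a +ᵥ (t • S) := by
    ext z
    simp only [Set.mem_image, Set.mem_vadd_set, Set.mem_smul_set]
    constructor
    · rintro ⟨y, hy, rfl⟩; exact ⟨t • y, ⟨y, hy, rfl⟩, rfl⟩
    · rintro ⟨w, ⟨y, hy, rfl⟩, rfl⟩; exact ⟨y, hy, rfl⟩
  rw [himg, measure_vadd, Measure.addHaar_smul_of_nonneg volume ht, finrank_euclideanSpace_fin]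

private lemma diam_affine_image {n : ℕ} (a : EuclideanSpace ℝ (Fin n)) {t : ℝ} (ht : 0 ≤ t)
    {S : Set (EuclideanSpace ℝ (Fin n))} (hS : Bornology.IsBounded S) :
    Metric.diam ((fun y => a + t • y) '' S) ≤ t * Metric.diam S := by
  have hlip : LipschitzWith (Real.toNNReal t) (fun y : EuclideanSpace ℝ (Fin n) => a + t • y) := by
    apply LipschitzWith.of_dist_le_mul
    intro y z
    rw [dist_add_left, dist_smul₀, Real.coe_toNNReal t ht, Real.norm_eq_abs, abs_of_nonneg ht]
  have h := hlip.diam_image_le S hS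
  rwa [Real.coe_toNNReal t ht] at h

theorem halo_excess_gives_large_sets (n : ℕ)
    (B : Set (Set (EuclideanSpace ℝ (Fin n))))
    (hB : ∀ R ∈ B, IsOpen R ∧ Bornology.IsBounded R ∧ Convex ℝ R)
    (hhom : ∀ R ∈ B, ∀ (a : EuclideanSpace ℝ (Fin n)) (t : ℝ), 0 < t →
      (fun x => a + t • x) '' R ∈ B)
    (hdens : IsDensityBasis B)
    (E : Set (EuclideanSpace ℝ (Fin n))) (hE : MeasurableSet E)
    (hE0 : 0 < volume E) (hEfin : volume E < ⊤)
    (hbig : volume {x : EuclideanSpace ℝ (Fin n) | MB B (E.indicator 1) x = 1}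
      > volume E) :
    ∃ A : Set (EuclideanSpace ℝ (Fin n)), A ⊆ Eᶜ ∧ 0 < volume A ∧
      ∀ x ∈ A, ∃ R : ℕ → Set (EuclideanSpace ℝ (Fin n)),
        (∀ j, R j ∈ B ∧ x ∈ R j) ∧
        (∀ j : ℕ, 2 ≤ j →
          (∫⁻ y in R j, E.indicator 1 y) / volume (R j)
            > ENNReal.ofReal (1 - 1 / (j : ℝ))) ∧
        Filter.Tendsto (fun j => Metric.diam (R j)) Filter.atTop Filter.atTop := by
  classical
  set S0 := {x : EuclideanSpace ℝ (Fin n) | MB B (E.indicator 1) x = 1} with hS0def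
  set Q : EuclideanSpace ℝ (Fin n) → Prop := fun x =>
    ∀ R : ℕ → Set (EuclideanSpace ℝ (Fin n)),
      (∀ k, R k ∈ B) → (∀ k, x ∈ R k) →
      Filter.Tendsto (fun k => Metric.diam (R k)) Filter.atTop (nhds 0) →
      Filter.Tendsto (fun k => (∫⁻ y in R k, E.indicator 1 y) / volume (R k))
        Filter.atTop (nhds (E.indicator (1 : EuclideanSpace ℝ (Fin n) → ℝ≥0∞) x)) with hQdef
  have haeQ : ∀ᵐ x ∂(volume : Measure (EuclideanSpace ℝ (Fin n))), Q x := hdens.2 E hE hEfin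
  have hDnull : volume {x : EuclideanSpace ℝ (Fin n) | ¬ Q x} = 0 := by
    rw [← MeasureTheory.ae_iff] ; exact haeQ
  refine ⟨(S0 \ E) \ {x | ¬ Q x}, ?_, ?_, ?_⟩
  · intro x hx
    exact hx.1.2
  · rw [measure_diff_null hDnull]
    by_contra h
    push_neg at h
    have h0 : volume (S0 \ E) = 0 := le_antisymm h zero_le
    have : volume S0 ≤ volume E := by
      calc volume S0 ≤ volume (S0 ∩ E) + volume (S0 \ E) := measure_le_inter_add_diff _ _ _
        _ = volume (S0 ∩ E) := by rw [h0, add_zero]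
        _ ≤ volume E := measure_mono inter_subset_right
    exact absurd hbig (not_lt.2 this)
  · rintro x ⟨⟨hxS0, hxE⟩, hxnQ⟩
    have hx1 : MB B (E.indicator 1) x = 1 := hxS0
    have hxQ : Q x := not_not.mp hxnQ
    -- Key claim
    have key : ∀ c : ℝ≥0∞, c < 1 → ∀ M : ℝ, ∃ R, R ∈ B ∧ x ∈ R ∧
        c < (∫⁻ y in R, E.indicator 1 y) / volume R ∧ M < Metric.diam R := by
      intro c hc M
      by_contra hcon
      push_neg at hcon
      -- the contracting sequence machinery
      set t : ℕ → ℝ := fun k => ((k : ℝ) + 2)⁻¹ with htdef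
      have ht_pos : ∀ k, 0 < t k := fun k => by positivity
      have ht_le : ∀ k, t k ≤ 2⁻¹ := by
        intro k
        have h2 : (2 : ℝ) ≤ (k : ℝ) + 2 := by
          have := Nat.cast_nonneg (α := ℝ) k; linarith
        exact inv_anti₀ (by norm_num) h2
      have ht0 : Tendsto t atTop (nhds 0) := by
        apply Filter.Tendsto.inv_tendsto_atTop
        exact tendsto_atTop_add_const_right atTop 2 tendsto_natCast_atTop_atTop
      have hpick : ∀ k : ℕ, ∃ R, R ∈ B ∧ x ∈ R ∧
          max c (ENNReal.ofReal (1 - t k ^ (n + 1))) <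
            (∫⁻ y in R, E.indicator 1 y) / volume R := by
        intro k
        have hlt1 : max c (ENNReal.ofReal (1 - t k ^ (n + 1))) < 1 := by
          refine max_lt hc (ENNReal.ofReal_lt_one.2 ?_)
          have := pow_pos (ht_pos k) (n + 1)
          linarith
        rw [← hx1] at hlt1
        simp only [MB, lt_iSup_iff] at hlt1
        obtain ⟨R, hRB, hxR, hR⟩ := hlt1
        exact ⟨R, hRB, hxR, hR⟩
      choose S hSB hSx hSavg using hpick
      have hSopen : ∀ k, IsOpen (S k) := fun k => (hB _ (hSB k)).1
      have hSbd : ∀ k, Bornology.IsBounded (S k) := fun k => (hB _ (hSB k)).2.1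
      have hSconv : ∀ k, Convex ℝ (S k) := fun k => (hB _ (hSB k)).2.2
      have hSv0 : ∀ k, volume (S k) ≠ 0 := fun k =>
        ((hSopen k).measure_pos volume ⟨x, hSx k⟩).ne'
      have hSvt : ∀ k, volume (S k) ≠ ⊤ := fun k => (hSbd k).measure_lt_top.ne
      have hSdiam : ∀ k, Metric.diam (S k) ≤ M := fun k =>
        hcon (S k) (hSB k) (hSx k) (lt_of_le_of_lt (le_max_left _ _) (hSavg k))
      have hM0 : 0 ≤ M := le_trans Metric.diam_nonneg (hSdiam 0)
      set S' : ℕ → Set (EuclideanSpace ℝ (Fin n)) :=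
        fun k => (fun y => (x - t k • x) + t k • y) '' S k with hS'def
      have hS'B : ∀ k, S' k ∈ B := fun k => hhom _ (hSB k) _ _ (ht_pos k)
      have hS'x : ∀ k, x ∈ S' k := fun k => ⟨x, hSx k, sub_add_cancel x (t k • x)⟩
      have hS'sub : ∀ k, S' k ⊆ S k := by
        intro k z hz
        obtain ⟨y, hy, rfl⟩ := hz
        have h1 : x - t k • x = (1 - t k) • x := by rw [sub_smul, one_smul]
        rw [h1]
        refine hSconv k (hSx k) hy ?_ (ht_pos k).le (by ring)
        have := ht_le k; norm_num at this ⊢; linarith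
      have hS'vol : ∀ k, volume (S' k) = ENNReal.ofReal (t k ^ n) * volume (S k) :=
        fun k => vol_affine_image _ (ht_pos k).le _
      have hS'v0 : ∀ k, volume (S' k) ≠ 0 := fun k =>
        (((hB _ (hS'B k)).1).measure_pos volume ⟨x, hS'x k⟩).ne'
      have hS'vt : ∀ k, volume (S' k) ≠ ⊤ := fun k => ((hB _ (hS'B k)).2.1).measure_lt_top.ne
      have hS'diam : ∀ k, Metric.diam (S' k) ≤ t k * M := fun k =>
        le_trans (diam_affine_image _ (ht_pos k).le (hSbd k))
          (mul_le_mul_of_nonneg_left (hSdiam k) (ht_pos k).le)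
      have hS'diam0 : Tendsto (fun k => Metric.diam (S' k)) atTop (nhds 0) := by
        have hub : Tendsto (fun k => t k * M) atTop (nhds 0) := by
          simpa using ht0.mul_const M
        exact squeeze_zero (fun k => Metric.diam_nonneg) hS'diam hub
      have hlim := hxQ S' hS'B hS'x hS'diam0
      rw [Set.indicator_of_notMem hxE] at hlim
      have hev : ∀ᶠ k in atTop,
          (∫⁻ y in S' k, E.indicator 1 y) / volume (S' k) < 2⁻¹ :=
        hlim.eventually_lt_const (by norm_num)
      obtain ⟨k, hk⟩ := hev.exists
      -- arithmetic contradiction at k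
      rw [lint_ind_eq hE] at hk
      have hk2 : volume (E ∩ S' k) < 2⁻¹ * volume (S' k) :=
        (ENNReal.div_lt_iff (Or.inl (hS'v0 k)) (Or.inl (hS'vt k))).1 hk
      have havg := lt_of_le_of_lt (le_max_right _ _) (hSavg k)
      rw [lint_ind_eq hE] at havg
      have h2 : ENNReal.ofReal (1 - t k ^ (n + 1)) * volume (S k) < volume (E ∩ S k) :=
        (ENNReal.lt_div_iff_mul_lt (Or.inl (hSv0 k)) (Or.inl (hSvt k))).1 havg
      have htpow_pos : (0 : ℝ) < t k ^ (n + 1) := pow_pos (ht_pos k) (n + 1)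
      have htpow_le : t k ^ (n + 1) ≤ 1 := by
        apply pow_le_one₀ (ht_pos k).le
        have := ht_le k; linarith
      have hbad : volume (S k \ E) < ENNReal.ofReal (t k ^ (n + 1)) * volume (S k) := by
        by_contra hnot
        push_neg at hnot
        have hsum : volume (S k ∩ E) + volume (S k \ E) = volume (S k) :=
          measure_inter_add_diff (S k) hE
        have hvv : volume (S k) < volume (S k) := by
          calc volume (S k)
              = ENNReal.ofReal (1 - t k ^ (n + 1)) * volume (S k)
                + ENNReal.ofReal (t k ^ (n + 1)) * volume (S k) := by
                rw [← add_mul, ← ENNReal.ofReal_add (by linarith) htpow_pos.le]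
                norm_num
            _ < volume (S k ∩ E) + volume (S k \ E) := by
                refine ENNReal.add_lt_add_of_lt_of_le
                  (ENNReal.mul_ne_top ENNReal.ofReal_ne_top (hSvt k)) ?_ hnot
                rw [inter_comm]; exact h2
            _ = volume (S k) := hsum
        exact lt_irrefl _ hvv
      have hEq : ENNReal.ofReal (t k ^ (n + 1)) * volume (S k)
          = ENNReal.ofReal (t k) * volume (S' k) := by
        rw [hS'vol k, ← mul_assoc, ← ENNReal.ofReal_mul (ht_pos k).le, ← pow_succ']
      have htk2 : ENNReal.ofReal (t k) ≤ 2⁻¹ := by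
        calc ENNReal.ofReal (t k) ≤ ENNReal.ofReal 2⁻¹ := ENNReal.ofReal_le_ofReal (ht_le k)
          _ = 2⁻¹ := by
            rw [ENNReal.ofReal_inv_of_pos (by norm_num), ENNReal.ofReal_ofNat]
      have hsub : volume (S' k \ E) ≤ 2⁻¹ * volume (S' k) := by
        calc volume (S' k \ E) ≤ volume (S k \ E) :=
              measure_mono (diff_subset_diff_left (hS'sub k))
          _ ≤ ENNReal.ofReal (t k ^ (n + 1)) * volume (S k) := hbad.le
          _ = ENNReal.ofReal (t k) * volume (S' k) := hEq
          _ ≤ 2⁻¹ * volume (S' k) := mul_le_mul_left htk2 _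
      have hvv' : volume (S' k) < volume (S' k) := by
        calc volume (S' k) = volume (S' k ∩ E) + volume (S' k \ E) :=
              (measure_inter_add_diff (S' k) hE).symm
          _ < 2⁻¹ * volume (S' k) + 2⁻¹ * volume (S' k) := by
              refine ENNReal.add_lt_add_of_lt_of_le
                (ne_top_of_le_ne_top (hS'vt k) (measure_mono diff_subset)) ?_ hsub
              rw [inter_comm]; exact hk2
          _ = volume (S' k) := by rw [← add_mul, ENNReal.inv_two_add_inv_two, one_mul]
      exact lt_irrefl _ hvv'
    -- now build the sequence from the key claim
    have hcj : ∀ j : ℕ, ENNReal.ofReal (1 - 1 / ((max j 2 : ℕ) : ℝ)) < 1 := by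
      intro j
      refine ENNReal.ofReal_lt_one.2 ?_
      have hm : (0 : ℝ) < ((max j 2 : ℕ) : ℝ) := by
        have : (2 : ℕ) ≤ max j 2 := le_max_right j 2
        exact_mod_cast lt_of_lt_of_le (by norm_num) this
      have := one_div_pos.2 hm
      linarith
    have hex : ∀ j : ℕ, ∃ R, R ∈ B ∧ x ∈ R ∧
        ENNReal.ofReal (1 - 1 / ((max j 2 : ℕ) : ℝ)) <
          (∫⁻ y in R, E.indicator 1 y) / volume R ∧ (j : ℝ) < Metric.diam R :=
      fun j => key _ (hcj j) j
    choose R hRB hRx hRavg hRdiam using hex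
    refine ⟨R, fun j => ⟨hRB j, hRx j⟩, ?_, ?_⟩
    · intro j hj
      have h := hRavg j
      rw [max_eq_left hj] at h
      exact h
    · exact tendsto_atTop_mono (fun j => (hRdiam j).le) tendsto_natCast_atTop_atTop
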